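/- Kernelized representation theorem: Let X ∈ ℝ^{d×M} with M ≤ d whose columns are pairwise orthogonal unit vectors. Then for any β > 0 and any positive column-stochastic matrix P ∈ ℝ^{M×M}, there exist matrices W_Q, W_K ∈ ℝ^{d×d} such that column-wise Softmax(β·(W_K X)ᵀ(W_Q X)) = P. -/

import Mathlib

open scoped BigOperators
open Matrix

/-- softmax -/
noncomputable def softmax {M : ℕ} (z : Fin M → ℝ) : Fin M → ℝ :=
  fun μ => Real.exp (z μ) / ∑ ν, Real.exp (z ν)

theorem stmt13 {d M : ℕ} (hMd : M ≤ d) (X : Matrix (Fin d) (Fin M) ℝ)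
    (horthonormal : ∀ i j : Fin M,
      (∑ k, X k i * X k j) = if i = j then 1 else 0)
    (β : ℝ) (hβ : 0 < β)
    (P : Matrix (Fin M) (Fin M) ℝ)
    (hPpos : ∀ i j, 0 < P i j)
    (hPcol : ∀ j, (∑ i, P i j) = 1) :
    ∃ WQ WK : Matrix (Fin d) (Fin d) ℝ,
      ∀ j, softmax (fun i => β * ((WK * X)ᵀ * (WQ * X)) i j)
        = fun i => P i j := by
  have hXX : Xᵀ * X = 1 := by
    ext i j
    simp only [Matrix.mul_apply, Matrix.transpose_apply, Matrix.one_apply]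
    exact horthonormal i j
  set C : Matrix (Fin M) (Fin M) ℝ := fun i j => β⁻¹ * Real.log (P i j) with hC
  refine ⟨X * C * Xᵀ, X * Xᵀ, ?_⟩
  have hK : (X * Xᵀ) * X = X := by rw [Matrix.mul_assoc, hXX, Matrix.mul_one]
  have hQ : (X * C * Xᵀ) * X = X * C := by
    rw [Matrix.mul_assoc, hXX, Matrix.mul_one]
  have hmain : ((X * Xᵀ * X)ᵀ) * ((X * C * Xᵀ) * X) = C := by
    rw [hK, hQ, ← Matrix.mul_assoc, hXX, Matrix.one_mul]
  intro j
  funext i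
  have hCij : ∀ i' : Fin M, β * ((X * Xᵀ * X)ᵀ * (X * C * Xᵀ * X)) i' j
      = Real.log (P i' j) := by
    intro i'
    rw [hmain]
    simp only [hC]
    rw [← mul_assoc, mul_inv_cancel₀ hβ.ne', one_mul]
  simp only [softmax, hCij]
  have hsum : (∑ ν, Real.exp (Real.log (P ν j))) = 1 := by
    rw [← hPcol j]
    exact Finset.sum_congr rfl fun ν _ => Real.exp_log (hPpos ν j)
  rw [hsum, Real.exp_log (hPpos i j), div_one]
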